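/- For all integers n ≥ 2 and 1 ≤ k ≤ n − 1, the following identity holds in Ĥ_n: (T_k⁻¹ T_{k−1}⁻¹ ⋯ T_1⁻¹ ρ)·(ρ T_{n−1} T_{n−2} ⋯ T_k) = ρ · T_{n−1} ⋯ T_{k+1} · T_{k−1}⁻¹ ⋯ T_1⁻¹ · ρ, where the products T_{n−1} ⋯ T_{k+1} and T_{k−1}⁻¹ ⋯ T_1⁻¹ are understood to be empty (equal to 1) when k = n − 1 and when k = 1, respectively; equivalently, ψ_R(ρ)·ψ_L(ρ) = ψ_L(ρ)·ψ_R(ρ) = ρ T_{n−1} ⋯ T_{k+1} T_{k−1}⁻¹ ⋯ T_1⁻¹ ρ. -/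

import Mathlib

/-!
Statement 6: existence and uniqueness of the parabolic embeddings `ψ_L` and `ψ_R`
for extended affine Hecke algebras.
-/

noncomputable section

namespace ParabolicInduction

/-- The ground ring `R = ℤ[q, q⁻¹]`. -/
abbrev R : Type := LaurentPolynomial ℤ

/-- The element `q ∈ R`. -/
def qR : R := LaurentPolynomial.T 1

/-- The element `q⁻¹ ∈ R`. -/
def qRinv : R := LaurentPolynomial.T (-1)

/-- Generators of the extended affine Hecke algebra `Ĥ_n`:  the `T_i` (present only
when `2 ≤ n`) and `ρ`, `ρ⁻¹`.  For `n = 1` only `ρ^{±1}` remain, so that `Ĥ_1` is the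
Laurent polynomial algebra `R[ρ, ρ⁻¹]`. -/
inductive HGen (n : ℕ) : Type
  | T (i : Fin n) (h : 2 ≤ n) : HGen n
  | rho : HGen n
  | rhoInv : HGen n

/-- Cyclic successor `i ↦ i + 1 (mod n)` on `Fin n`. -/
def cyc {n : ℕ} (i : Fin n) : Fin n := ⟨((i : ℕ) + 1) % n, Nat.mod_lt _ i.pos⟩

/-- The defining relations of the extended affine Hecke algebra `Ĥ_n`. -/
inductive HRel (n : ℕ) : FreeAlgebra R (HGen n) → FreeAlgebra R (HGen n) → Prop
  | quad (i : Fin n) (h : 2 ≤ n) :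
      HRel n ((FreeAlgebra.ι R (HGen.T i h) + algebraMap R _ qR) *
        (FreeAlgebra.ι R (HGen.T i h) - algebraMap R _ qRinv)) 0
  | comm (i j : Fin n) (h : 2 < n)
      (h1 : ((i : ℕ) : ZMod n) - ((j : ℕ) : ZMod n) ≠ 1)
      (h2 : ((i : ℕ) : ZMod n) - ((j : ℕ) : ZMod n) ≠ -1) :
      HRel n (FreeAlgebra.ι R (HGen.T i h.le) * FreeAlgebra.ι R (HGen.T j h.le))
        (FreeAlgebra.ι R (HGen.T j h.le) * FreeAlgebra.ι R (HGen.T i h.le))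
  | braid (i : Fin n) (h : 2 < n) :
      HRel n
        (FreeAlgebra.ι R (HGen.T i h.le) * FreeAlgebra.ι R (HGen.T (cyc i) h.le) *
          FreeAlgebra.ι R (HGen.T i h.le))
        (FreeAlgebra.ι R (HGen.T (cyc i) h.le) * FreeAlgebra.ι R (HGen.T i h.le) *
          FreeAlgebra.ι R (HGen.T (cyc i) h.le))
  | rho_rhoInv : HRel n (FreeAlgebra.ι R HGen.rho * FreeAlgebra.ι R HGen.rhoInv) 1
  | rhoInv_rho : HRel n (FreeAlgebra.ι R HGen.rhoInv * FreeAlgebra.ι R HGen.rho) 1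
  | conj (i : Fin n) (h : 2 ≤ n) :
      HRel n
        (FreeAlgebra.ι R HGen.rho * FreeAlgebra.ι R (HGen.T i h) * FreeAlgebra.ι R HGen.rhoInv)
        (FreeAlgebra.ι R (HGen.T (cyc i) h))

/-- The extended affine Hecke algebra `Ĥ_n`, presented by generators and relations. -/
abbrev Hecke (n : ℕ) : Type := RingQuot (HRel n)

/-- The generator `T_i` of `Ĥ_n` (indices read modulo `n`). -/
def HT {n : ℕ} (h : 2 ≤ n) (i : ℕ) : Hecke n :=
  RingQuot.mkAlgHom R (HRel n)
    (FreeAlgebra.ι R (HGen.T ⟨i % n, Nat.mod_lt _ (by omega)⟩ h))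

/-- The generator `ρ` of `Ĥ_n`. -/
def Hrho (n : ℕ) : Hecke n := RingQuot.mkAlgHom R (HRel n) (FreeAlgebra.ι R HGen.rho)

/-- The generator `ρ⁻¹` of `Ĥ_n`. -/
def HrhoInv (n : ℕ) : Hecke n := RingQuot.mkAlgHom R (HRel n) (FreeAlgebra.ι R HGen.rhoInv)

/-- The element `T_i⁻¹ = T_i + q - q⁻¹` of `Ĥ_n`. -/
def HTinv {n : ℕ} (h : 2 ≤ n) (i : ℕ) : Hecke n :=
  HT h i + algebraMap R (Hecke n) (qR - qRinv)

/-- The descending ordered product `T_a T_{a-1} ⋯ T_b` (empty, i.e. `1`, if `b > a`). -/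
def Tdesc {n : ℕ} (h : 2 ≤ n) (a b : ℕ) : Hecke n :=
  (((List.range' b (a + 1 - b)).reverse).map (HT h)).prod

/-- The ascending ordered product `T_a T_{a+1} ⋯ T_b` (empty, i.e. `1`, if `b < a`). -/
def Tasc {n : ℕ} (h : 2 ≤ n) (a b : ℕ) : Hecke n :=
  ((List.range' a (b + 1 - a)).map (HT h)).prod

/-- The descending ordered product `T_a⁻¹ T_{a-1}⁻¹ ⋯ T_b⁻¹` (empty if `b > a`). -/
def TinvDesc {n : ℕ} (h : 2 ≤ n) (a b : ℕ) : Hecke n :=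
  (((List.range' b (a + 1 - b)).reverse).map (HTinv h)).prod

/-- The ascending ordered product `T_a⁻¹ T_{a+1}⁻¹ ⋯ T_b⁻¹` (empty if `b < a`). -/
def TinvAsc {n : ℕ} (h : 2 ≤ n) (a b : ℕ) : Hecke n :=
  ((List.range' a (b + 1 - a)).map (HTinv h)).prod

/-- The defining conditions for the left parabolic embedding `ψ_L : Ĥ_k → Ĥ_n`:
`ψ_L(T_i) = T_i` for `1 ≤ i ≤ k - 1`,
`ψ_L(T_0) = T_k⁻¹ ⋯ T_{n-1}⁻¹ T_0 T_{n-1} ⋯ T_k` (when `2 ≤ k`), and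
`ψ_L(ρ) = ρ T_{n-1} ⋯ T_k`. -/
def IsPsiL (n k : ℕ) (hn : 2 ≤ n) (f : Hecke k →ₐ[R] Hecke n) : Prop :=
  (∀ (hk : 2 ≤ k) (i : ℕ), 1 ≤ i → i ≤ k - 1 → f (HT hk i) = HT hn i) ∧
  (∀ hk : 2 ≤ k, f (HT hk 0) = TinvAsc hn k (n - 1) * HT hn 0 * Tdesc hn (n - 1) k) ∧
  f (Hrho k) = Hrho n * Tdesc hn (n - 1) k

/-- The defining conditions for the right parabolic embedding `ψ_R : Ĥ_m → Ĥ_n`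
(where `m = n - k`):
`ψ_R(T_j) = T_{k+j}` for `1 ≤ j ≤ m - 1`,
`ψ_R(T_0) = T_0 T_1 ⋯ T_{k-1} T_k T_{k-1}⁻¹ ⋯ T_1⁻¹ T_0⁻¹` (when `2 ≤ m`), and
`ψ_R(ρ) = T_k⁻¹ T_{k-1}⁻¹ ⋯ T_1⁻¹ ρ`. -/
def IsPsiR (n k m : ℕ) (hn : 2 ≤ n) (g : Hecke m →ₐ[R] Hecke n) : Prop :=
  (∀ (hm : 2 ≤ m) (j : ℕ), 1 ≤ j → j ≤ m - 1 → g (HT hm j) = HT hn (k + j)) ∧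
  (∀ hm : 2 ≤ m, g (HT hm 0) = Tasc hn 0 (k - 1) * HT hn k * TinvDesc hn (k - 1) 0) ∧
  g (Hrho m) = TinvDesc hn k 1 * Hrho n
section Aux
variable {n : ℕ}

lemma qR_mul_qRinv : qR * qRinv = 1 := by
  rw [qR, qRinv, ← LaurentPolynomial.T_add]; norm_num

lemma mk_rel {a b : FreeAlgebra R (HGen n)} (h : HRel n a b) :
    RingQuot.mkAlgHom R (HRel n) a = RingQuot.mkAlgHom R (HRel n) b :=
  RingQuot.mkAlgHom_rel R h

lemma rho_mul_rhoInv : Hrho n * HrhoInv n = 1 := by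
  have := mk_rel (HRel.rho_rhoInv (n := n))
  simpa [Hrho, HrhoInv, map_mul, map_one] using this

lemma rhoInv_mul_rho : HrhoInv n * Hrho n = 1 := by
  have := mk_rel (HRel.rhoInv_rho (n := n))
  simpa [Hrho, HrhoInv, map_mul, map_one] using this

lemma HT_mod (h : 2 ≤ n) (i : ℕ) : HT h (i % n) = HT h i := by
  have : i % n % n = i % n := Nat.mod_mod_of_dvd _ dvd_rfl
  simp only [HT, this]
end Aux
section Aux2
variable {n : ℕ}

lemma rho_mul_HT (h : 2 ≤ n) (i : ℕ) : Hrho n * HT h i = HT h (i + 1) * Hrho n := by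
  have h1 := mk_rel (HRel.conj ⟨i % n, Nat.mod_lt _ (by omega)⟩ h)
  have hc : cyc (n := n) ⟨i % n, Nat.mod_lt _ (by omega)⟩ =
      ⟨(i + 1) % n, Nat.mod_lt _ (by omega)⟩ := by
    apply Fin.ext
    show (i % n + 1) % n = (i + 1) % n
    conv_rhs => rw [Nat.add_mod, Nat.one_mod_eq_one.mpr (by omega)]
  rw [hc] at h1
  simp only [map_mul] at h1
  have : Hrho n * HT h i * HrhoInv n = HT h (i + 1) := h1
  calc Hrho n * HT h i = Hrho n * HT h i * (HrhoInv n * Hrho n) := by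
        rw [rhoInv_mul_rho, mul_one]
    _ = (Hrho n * HT h i * HrhoInv n) * Hrho n := by rw [mul_assoc, mul_assoc, mul_assoc]
    _ = HT h (i + 1) * Hrho n := by rw [this]

lemma rho_mul_HTinv (h : 2 ≤ n) (i : ℕ) : Hrho n * HTinv h i = HTinv h (i + 1) * Hrho n := by
  simp only [HTinv, mul_add, add_mul, rho_mul_HT]
  rw [← Algebra.commutes]

lemma HT_quad (h : 2 ≤ n) (i : ℕ) :
    HT h i * HT h i + algebraMap R (Hecke n) (qR - qRinv) * HT h i = 1 := by
  have h1 := mk_rel (HRel.quad ⟨i % n, Nat.mod_lt _ (by omega)⟩ h)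
  simp only [map_mul, map_add, map_sub, map_zero, AlgHom.commutes] at h1
  have h2 : (HT h i + algebraMap R (Hecke n) qR) * (HT h i - algebraMap R (Hecke n) qRinv)
      = 0 := h1
  have hq : algebraMap R (Hecke n) qR * algebraMap R (Hecke n) qRinv = 1 := by
    rw [← map_mul, qR_mul_qRinv, map_one]
  have expand : (HT h i + algebraMap R (Hecke n) qR) * (HT h i - algebraMap R (Hecke n) qRinv)
      = (HT h i * HT h i + algebraMap R (Hecke n) (qR - qRinv) * HT h i) - 1 := by
    have hc := Algebra.commutes qRinv (HT h i)
    rw [map_sub]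
    have key : ∀ {A : Type} [Ring A] (x a b : A), a * b = 1 → b * x = x * b →
        (x + a) * (x - b) = x * x + (a - b) * x - 1 := by
      intro A _ x a b hab hbx
      simp only [mul_sub, add_mul, sub_mul, hab, ← hbx]
      abel
    exact key (A := Hecke n) (HT h i) (algebraMap R (Hecke n) qR) (algebraMap R (Hecke n) qRinv) hq hc
  rw [expand] at h2
  exact sub_eq_zero.mp h2

lemma HT_mul_HTinv (h : 2 ≤ n) (i : ℕ) : HT h i * HTinv h i = 1 := by
  have := HT_quad h i
  rw [HTinv, mul_add, ← Algebra.commutes (qR - qRinv) (HT h i)]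
  exact this

lemma HTinv_mul_HT (h : 2 ≤ n) (i : ℕ) : HTinv h i * HT h i = 1 := by
  have := HT_quad h i
  rw [HTinv, add_mul]
  exact this
end Aux2
section Aux3
variable {n : ℕ}

lemma HT_comm (h : 2 < n) {i j : ℕ} (h1 : j + 2 ≤ i) (h2 : i + 2 ≤ n + j) (h3 : i < n) :
    HT h.le i * HT h.le j = HT h.le j * HT h.le i := by
  haveI : NeZero n := ⟨by omega⟩
  have hjn : j < n := by omega
  have castmod : ∀ m : ℕ, m < n → ((m % n : ℕ) : ZMod n) = (m : ZMod n) := by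
    intro m hm; rw [Nat.mod_eq_of_lt hm]
  have key : ((i % n : ℕ) : ZMod n) - ((j % n : ℕ) : ZMod n) = ((i - j : ℕ) : ZMod n) := by
    rw [castmod i h3, castmod j hjn, Nat.cast_sub (by omega)]
  have hd1 : (i - j : ℕ) < n := by omega
  have hv : (((i - j : ℕ) : ZMod n)).val = i - j := ZMod.val_cast_of_lt hd1
  haveI : Fact (1 < n) := ⟨by omega⟩
  have c1 : ((i % n : ℕ) : ZMod n) - ((j % n : ℕ) : ZMod n) ≠ 1 := by
    rw [key]
    intro hh
    have := congrArg ZMod.val hh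
    rw [hv, ZMod.val_one] at this
    omega
  have c2 : ((i % n : ℕ) : ZMod n) - ((j % n : ℕ) : ZMod n) ≠ -1 := by
    rw [key]
    intro hh
    have := congrArg ZMod.val hh
    rw [hv] at this
    obtain ⟨m, rfl⟩ : ∃ m, n = m + 1 := ⟨n - 1, by omega⟩
    rw [ZMod.val_neg_one] at this
    omega
  have := mk_rel (HRel.comm ⟨i % n, Nat.mod_lt _ (by omega)⟩ ⟨j % n, Nat.mod_lt _ (by omega)⟩ h c1 c2)
  simp only [map_mul] at this
  exact this

lemma HTinv_comm_HT (h : 2 < n) {i j : ℕ} (h1 : j + 2 ≤ i) (h2 : i + 2 ≤ n + j) (h3 : i < n) :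
    Commute (HTinv h.le j) (HT h.le i) := by
  have : Commute (HT h.le j) (HT h.le i) := (HT_comm h h1 h2 h3).symm
  exact (this.add_left (Algebra.commutes (qR - qRinv) (HT h.le i)))

end Aux3
section Aux4
variable {n : ℕ}

/-- Generic descending chain. -/
def chainD (f : ℕ → Hecke n) (a b : ℕ) : Hecke n :=
  (((List.range' b (a + 1 - b)).reverse).map f).prod

lemma Tdesc_eq (h : 2 ≤ n) (a b : ℕ) : Tdesc h a b = chainD (HT h) a b := rfl

lemma TinvDesc_eq (h : 2 ≤ n) (a b : ℕ) : TinvDesc h a b = chainD (HTinv h) a b := rfl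

lemma chainD_empty (f : ℕ → Hecke n) {a b : ℕ} (hab : a < b) : chainD f a b = 1 := by
  unfold chainD
  rw [show a + 1 - b = 0 by omega]
  simp

lemma prod_map_shift (f : ℕ → Hecke n) (hf : ∀ i, f (1 + i) * Hrho n = Hrho n * f i)
    (l : List ℕ) :
    (l.map fun i => f (1 + i)).prod * Hrho n = Hrho n * (l.map f).prod := by
  induction l with
  | nil => simp
  | cons a l ih =>
    rw [List.map_cons, List.prod_cons, List.map_cons, List.prod_cons,
      mul_assoc, ih, ← mul_assoc, hf, mul_assoc]

lemma chainD_shift (f : ℕ → Hecke n) (hf : ∀ i, f (1 + i) * Hrho n = Hrho n * f i)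
    (a b : ℕ) : chainD f (a + 1) (b + 1) * Hrho n = Hrho n * chainD f a b := by
  unfold chainD
  rw [show a + 1 + 1 - (b + 1) = a + 1 - b by omega, show b + 1 = 1 + b by omega,
    ← List.map_add_range' (a := 1) b (a + 1 - b), ← List.map_reverse, List.map_map]
  exact prod_map_shift f hf _

lemma chainD_top (f : ℕ → Hecke n) {a b : ℕ} (hb : b ≤ a + 1) :
    chainD f (a + 1) b = f (a + 1) * chainD f a b := by
  unfold chainD
  rw [show a + 1 + 1 - b = (a + 1 - b) + 1 by omega, List.range'_concat,
    show b + 1 * (a + 1 - b) = a + 1 by omega]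
  simp

lemma chainD_bot (f : ℕ → Hecke n) {a b : ℕ} (hb : b ≤ a) :
    chainD f a b = chainD f a (b + 1) * f b := by
  unfold chainD
  rw [show a + 1 - b = (a - b) + 1 by omega, List.range'_succ,
    show a + 1 - (b + 1) = a - b by omega]
  simp

lemma chainD_commute (f : ℕ → Hecke n) (x : Hecke n) {a b : ℕ}
    (hcomm : ∀ i, b ≤ i → i ≤ a → Commute x (f i)) : Commute x (chainD f a b) := by
  apply Commute.list_prod_right
  intro y hy
  simp only [List.mem_map, List.mem_reverse, List.mem_range'_1] at hy
  obtain ⟨i, ⟨hbi, hia⟩, rfl⟩ := hy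
  exact hcomm i hbi (by omega)

end Aux4
/-- **Statement 10.**  In `Ĥ_n`, one has
`(T_k⁻¹ ⋯ T_1⁻¹ ρ)(ρ T_{n-1} ⋯ T_k) = ρ T_{n-1} ⋯ T_{k+1} T_{k-1}⁻¹ ⋯ T_1⁻¹ ρ`;
equivalently `ψ_R(ρ)·ψ_L(ρ) = ψ_L(ρ)·ψ_R(ρ)` equals that same element
(empty products being `1` in the extreme cases `k = n - 1` resp. `k = 1`). -/
theorem statement_10 (n k : ℕ) (hn : 2 ≤ n) (hk1 : 1 ≤ k) (hk2 : k ≤ n - 1) :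
    ((TinvDesc hn k 1 * Hrho n) * (Hrho n * Tdesc hn (n - 1) k) =
      Hrho n * Tdesc hn (n - 1) (k + 1) * TinvDesc hn (k - 1) 1 * Hrho n) ∧
    ((Hrho n * Tdesc hn (n - 1) k) * (TinvDesc hn k 1 * Hrho n) =
      Hrho n * Tdesc hn (n - 1) (k + 1) * TinvDesc hn (k - 1) 1 * Hrho n) := by
  obtain ⟨k', rfl⟩ : ∃ k', k = k' + 1 := ⟨k - 1, by omega⟩
  set ρ := Hrho n with hρ
  have hfT : ∀ i, HT hn (1 + i) * ρ = ρ * HT hn i := fun i => by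
    rw [Nat.add_comm]; exact (rho_mul_HT hn i).symm
  have hfInv : ∀ i, HTinv hn (1 + i) * ρ = ρ * HTinv hn i := fun i => by
    rw [Nat.add_comm]; exact (rho_mul_HTinv hn i).symm
  simp only [TinvDesc_eq, Tdesc_eq, Nat.add_sub_cancel]
  constructor
  · -- first identity
    -- step 1 : reduce the LHS
    have e1 : chainD (HTinv hn) (k' + 1) 1 * ρ = ρ * chainD (HTinv hn) k' 0 :=
      chainD_shift _ hfInv k' 0
    have e2 : chainD (HTinv hn) k' 0 = chainD (HTinv hn) k' 1 * HTinv hn 0 :=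
      chainD_bot _ (Nat.zero_le k')
    have e3 : HTinv hn 0 * ρ = ρ * HTinv hn (n - 1) := by
      have h0 : HTinv hn 0 = HTinv hn ((n - 1) + 1) := by
        have : (0 : ℕ) % n = ((n - 1) + 1) % n := by
          rw [Nat.zero_mod, show n - 1 + 1 = n by omega, Nat.mod_self]
        simp only [HTinv, HT, this]
      rw [h0]
      exact (rho_mul_HTinv hn (n - 1)).symm
    have e4 : chainD (HT hn) (n - 1) (k' + 1) = HT hn (n - 1) * chainD (HT hn) (n - 2) (k' + 1) := by
      rw [show n - 1 = (n - 2) + 1 by omega]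
      exact chainD_top _ (by omega)
    have e5 : HTinv hn (n - 1) * HT hn (n - 1) = 1 := HTinv_mul_HT hn _
    have step1 : chainD (HTinv hn) (k' + 1) 1 * ρ * (ρ * chainD (HT hn) (n - 1) (k' + 1))
        = ρ * (chainD (HTinv hn) k' 1 * (ρ * chainD (HT hn) (n - 2) (k' + 1))) := by
      calc chainD (HTinv hn) (k' + 1) 1 * ρ * (ρ * chainD (HT hn) (n - 1) (k' + 1))
          = (ρ * chainD (HTinv hn) k' 0) * (ρ * chainD (HT hn) (n - 1) (k' + 1)) := by rw [e1]
        _ = (ρ * (chainD (HTinv hn) k' 1 * HTinv hn 0)) *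
              (ρ * (HT hn (n - 1) * chainD (HT hn) (n - 2) (k' + 1))) := by rw [← e2, ← e4]
        _ = ρ * (chainD (HTinv hn) k' 1 * ((HTinv hn 0 * ρ) *
              (HT hn (n - 1) * chainD (HT hn) (n - 2) (k' + 1)))) := by simp only [mul_assoc]
        _ = ρ * (chainD (HTinv hn) k' 1 * ((ρ * HTinv hn (n - 1)) *
              (HT hn (n - 1) * chainD (HT hn) (n - 2) (k' + 1)))) := by rw [e3]
        _ = ρ * (chainD (HTinv hn) k' 1 * (ρ * ((HTinv hn (n - 1) * HT hn (n - 1)) *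
              chainD (HT hn) (n - 2) (k' + 1)))) := by simp only [mul_assoc]
        _ = ρ * (chainD (HTinv hn) k' 1 * (ρ * chainD (HT hn) (n - 2) (k' + 1))) := by
              rw [e5, one_mul]
    rw [step1]
    rcases Nat.eq_zero_or_pos k' with hk0 | hkpos
    · subst hk0
      have hemp : chainD (HTinv hn) 0 1 = (1 : Hecke n) := chainD_empty _ (by omega)
      have e6 : chainD (HT hn) (n - 1) 2 * ρ = ρ * chainD (HT hn) (n - 2) 1 := by
        rw [show n - 1 = (n - 2) + 1 by omega]
        exact chainD_shift _ hfT (n - 2) 1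
      calc ρ * (chainD (HTinv hn) 0 1 * (ρ * chainD (HT hn) (n - 2) 1))
          = ρ * ((chainD (HT hn) (n - 1) 2 * ρ)) := by rw [hemp, one_mul, e6]
        _ = ρ * chainD (HT hn) (n - 1) (0 + 1 + 1) * chainD (HTinv hn) 0 1 * ρ := by
            rw [hemp]; simp only [mul_assoc, mul_one, one_mul]
    · obtain ⟨k'', rfl⟩ : ∃ k'', k' = k'' + 1 := ⟨k' - 1, by omega⟩
      have e7 : chainD (HTinv hn) (k'' + 1) 1 * ρ = ρ * chainD (HTinv hn) k'' 0 :=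
        chainD_shift _ hfInv k'' 0
      have e8 : chainD (HT hn) (n - 1) (k'' + 1 + 1 + 1) * ρ
          = ρ * chainD (HT hn) (n - 2) (k'' + 1 + 1) := by
        rw [show n - 1 = (n - 2) + 1 by omega]
        exact chainD_shift _ hfT (n - 2) (k'' + 1 + 1)
      have hn3 : 2 < n := by omega
      have e9 : Commute (chainD (HTinv hn) k'' 0) (chainD (HT hn) (n - 2) (k'' + 1 + 1)) := by
        apply chainD_commute
        intro i hbi hia
        refine (chainD_commute (HTinv hn) (HT hn i) fun j hbj hja => ?_).symm
        exact (HTinv_comm_HT hn3 (by omega) (by omega) (by omega)).symm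
      calc ρ * (chainD (HTinv hn) (k'' + 1) 1 * (ρ * chainD (HT hn) (n - 2) (k'' + 1 + 1)))
          = ρ * ((chainD (HTinv hn) (k'' + 1) 1 * ρ) * chainD (HT hn) (n - 2) (k'' + 1 + 1)) := by
            simp only [mul_assoc]
        _ = ρ * ((ρ * chainD (HTinv hn) k'' 0) * chainD (HT hn) (n - 2) (k'' + 1 + 1)) := by
            rw [e7]
        _ = ρ * (ρ * (chainD (HTinv hn) k'' 0 * chainD (HT hn) (n - 2) (k'' + 1 + 1))) := by
            simp only [mul_assoc]
        _ = ρ * (ρ * (chainD (HT hn) (n - 2) (k'' + 1 + 1) * chainD (HTinv hn) k'' 0)) := by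
            rw [e9.eq]
        _ = ρ * ((chainD (HT hn) (n - 1) (k'' + 1 + 1 + 1) * ρ) * chainD (HTinv hn) k'' 0) := by
            rw [e8]; simp only [mul_assoc]
        _ = ρ * (chainD (HT hn) (n - 1) (k'' + 1 + 1 + 1) *
              (chainD (HTinv hn) (k'' + 1) 1 * ρ)) := by rw [e7]; simp only [mul_assoc]
        _ = ρ * chainD (HT hn) (n - 1) (k'' + 1 + 1 + 1) * chainD (HTinv hn) (k'' + 1) 1 * ρ := by
            simp only [mul_assoc]
  · -- second identity
    have f1 : chainD (HT hn) (n - 1) (k' + 1)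
        = chainD (HT hn) (n - 1) (k' + 1 + 1) * HT hn (k' + 1) :=
      chainD_bot _ (by omega)
    have f2 : chainD (HTinv hn) (k' + 1) 1
        = HTinv hn (k' + 1) * chainD (HTinv hn) k' 1 :=
      chainD_top _ (by omega)
    have cancel : ∀ X : Hecke n, HT hn (k' + 1) * (HTinv hn (k' + 1) * X) = X := fun X => by
      rw [← mul_assoc, HT_mul_HTinv, one_mul]
    calc (ρ * chainD (HT hn) (n - 1) (k' + 1)) * (chainD (HTinv hn) (k' + 1) 1 * ρ)
        = (ρ * (chainD (HT hn) (n - 1) (k' + 1 + 1) * HT hn (k' + 1))) *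
            ((HTinv hn (k' + 1) * chainD (HTinv hn) k' 1) * ρ) := by rw [← f1, ← f2]
      _ = ρ * (chainD (HT hn) (n - 1) (k' + 1 + 1) * (HT hn (k' + 1) *
            (HTinv hn (k' + 1) * (chainD (HTinv hn) k' 1 * ρ)))) := by simp only [mul_assoc]
      _ = ρ * (chainD (HT hn) (n - 1) (k' + 1 + 1) * (chainD (HTinv hn) k' 1 * ρ)) := by
          rw [cancel]
      _ = ρ * chainD (HT hn) (n - 1) (k' + 1 + 1) * chainD (HTinv hn) k' 1 * ρ := by
          simp only [mul_assoc]

end ParabolicInduction
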